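/- arXiv:1902.06820 — 2 statements merged into one kernel-verified Lean document; each statement's English description precedes it below -/
import Mathlib

section
/- There exist integrable functions E, φ : ℝ² × ℝ → ℝ, a flow v ∈ ℝ², and a point (x, t) such that ((L_v E) ⋆ φ)(x, t) ≠ (L_v(E ⋆ φ))(x, t); i.e., the shear L_v is not equivariant to 3D cross-correlation. -/
open MeasureTheory

noncomputable def shearAct (v : ℝ × ℝ) (E : (ℝ × ℝ) × ℝ → ℝ) : (ℝ × ℝ) × ℝ → ℝ :=
  fun p => E (p.1 + p.2 • v, p.2)

noncomputable def corr3 (E φ : (ℝ × ℝ) × ℝ → ℝ) (p : (ℝ × ℝ) × ℝ) : ℝ :=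
  ∫ q : (ℝ × ℝ) × ℝ, E q * φ (q.1 - p.1, q.2 - p.2)

/-- the shear is NOT equivariant to 3D cross-correlation. -/
theorem shear_not_equivariant :
    ∃ (E φ : (ℝ × ℝ) × ℝ → ℝ) (v x : ℝ × ℝ) (t : ℝ),
      Integrable E ∧ Integrable φ ∧
      corr3 (shearAct v E) φ (x, t) ≠ corr3 E φ (x + t • v, t) := by
  set S : Set ((ℝ × ℝ) × ℝ) :=
    (Set.Icc (0:ℝ) 1 ×ˢ Set.Icc (0:ℝ) 1) ×ˢ Set.Icc (1:ℝ) 2 with hSdef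
  have hS : MeasurableSet S :=
    (measurableSet_Icc.prod measurableSet_Icc).prod measurableSet_Icc
  have hvol : volume S = 1 := by
    rw [hSdef, Measure.volume_eq_prod, Measure.prod_prod, Measure.volume_eq_prod, Measure.prod_prod,
      Real.volume_Icc]
    norm_num
  set f : (ℝ × ℝ) × ℝ → ℝ := S.indicator (fun _ => (1:ℝ)) with hfdef
  have hint : Integrable f := by
    rw [hfdef, integrable_indicator_iff hS]
    exact integrableOn_const (by rw [hvol]; exact ENNReal.one_ne_top) (by simp)
  refine ⟨f, f, (10, 0), 0, 0, hint, hint, ?_⟩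
  have hLHS : corr3 (shearAct (10, 0) f) f (0, 0) = 0 := by
    unfold corr3
    have : ∀ q : (ℝ × ℝ) × ℝ,
        shearAct (10, 0) f q * f (q.1 - (0,0).1, q.2 - (0,0).2) = 0 := by
      intro q
      by_cases hq : q ∈ S
      · have h1 : (q.1 + q.2 • ((10:ℝ), (0:ℝ)), q.2) ∉ S := by
          intro hmem
          have h2 := hq.2.1
          have h3 := hmem.1.1.2
          have : (q.1 + q.2 • ((10:ℝ), (0:ℝ))).1 = q.1.1 + q.2 * 10 := by
            simp [Prod.smul_def]
          rw [this] at h3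
          have hq11 := hq.1.1.1
          nlinarith
        show f (q.1 + q.2 • ((10:ℝ),(0:ℝ)), q.2) * _ = 0
        rw [hfdef, Set.indicator_of_notMem h1, zero_mul]
      · have : f (q.1 - (0,0).1, q.2 - (0,0).2) = 0 := by
          simp [hfdef, Set.indicator_of_notMem, hq]
        rw [this, mul_zero]
    simp only [this, integral_zero]
  have hRHS : corr3 f f ((0:ℝ×ℝ) + (0:ℝ) • ((10:ℝ),(0:ℝ)), 0) = 1 := by
    unfold corr3
    have heq : ∀ q : (ℝ × ℝ) × ℝ,
        f q * f (q.1 - ((0:ℝ×ℝ) + (0:ℝ) • ((10:ℝ),(0:ℝ))), q.2 - 0) = f q := by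
      intro q
      have : (q.1 - ((0:ℝ×ℝ) + (0:ℝ) • ((10:ℝ),(0:ℝ))), q.2 - 0) = q := by
        simp
      rw [this]
      by_cases hq : q ∈ S
      · simp [hfdef, Set.indicator_of_mem hq]
      · simp [hfdef, Set.indicator_of_notMem hq]
    simp only [heq]
    rw [hfdef, integral_indicator_const _ hS, Measure.real, hvol]
    simp
  rw [hLHS, hRHS]
  norm_num
end

section
/- The 2D projection correlation of a sheared signal also fails equivariance: there exist integrable E, φ : ℝ² × ℝ → ℝ and v ∈ ℝ² such that the function x ↦ ∫∫ (L_v E)(ξ, t) φ(ξ − x, t) dξ dt is not a translate of x ↦ ∫∫ E(ξ, t) φ(ξ − x, t) dξ dt. -/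
open MeasureTheory

/-- 2D projection correlation of a 3D signal: `(E ⋆₂ φ)(x) = ∫∫ E(ξ,t) φ(ξ−x,t) dξ dt`. -/
noncomputable def corr2 (E φ : (ℝ × ℝ) × ℝ → ℝ) (x : ℝ × ℝ) : ℝ :=
  ∫ q : (ℝ × ℝ) × ℝ, E q * φ (q.1 - x, q.2)

noncomputable def uu : ℝ → ℝ := (Set.Icc (0:ℝ) 1).indicator 1

noncomputable def ff : ℝ × ℝ → ℝ := fun ξ => uu ξ.1 * uu ξ.2

noncomputable def ss : ℝ → ℝ :=
  fun t => (Set.Icc (0:ℝ) 1).indicator 1 t - (Set.Icc (2:ℝ) 3).indicator 1 t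

noncomputable def cc : ℝ → ℝ := (Set.Icc (0:ℝ) 3).indicator 1

lemma ind_bounds (a b t : ℝ) : 0 ≤ (Set.Icc a b).indicator (1 : ℝ → ℝ) t ∧
    (Set.Icc a b).indicator (1 : ℝ → ℝ) t ≤ 1 := by
  rw [Set.indicator_apply]; split_ifs <;> norm_num

lemma ind_int (a b : ℝ) : Integrable ((Set.Icc a b).indicator (1 : ℝ → ℝ)) := by
  rw [integrable_indicator_iff measurableSet_Icc]
  exact integrableOn_const (by simp [Real.volume_Icc])

lemma uu_meas : Measurable uu := measurable_const.indicator measurableSet_Icc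

lemma uu_int : Integrable uu := ind_int 0 1

lemma uu_nonneg (x : ℝ) : 0 ≤ uu x := (ind_bounds 0 1 x).1

lemma uu_le_one (x : ℝ) : uu x ≤ 1 := (ind_bounds 0 1 x).2

lemma uu_of_mem {x : ℝ} (h : 0 ≤ x) (h' : x ≤ 1) : uu x = 1 := by
  unfold uu
  rw [Set.indicator_of_mem (Set.mem_Icc.2 ⟨h, h'⟩)]; rfl

lemma uu_eq_zero {x : ℝ} (h : ¬ (0 ≤ x ∧ x ≤ 1)) : uu x = 0 := by
  unfold uu
  exact Set.indicator_of_notMem (by simpa [Set.mem_Icc] using h) _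

lemma ff_meas : Measurable ff := (uu_meas.comp measurable_fst).mul (uu_meas.comp measurable_snd)

lemma ff_int : Integrable ff := uu_int.mul_prod uu_int

lemma ff_nonneg (ξ : ℝ × ℝ) : 0 ≤ ff ξ := mul_nonneg (uu_nonneg _) (uu_nonneg _)

lemma ff_le_one (ξ : ℝ × ℝ) : ff ξ ≤ 1 := by
  calc ff ξ ≤ 1 * 1 := mul_le_mul (uu_le_one _) (uu_le_one _) (uu_nonneg _) zero_le_one
  _ = 1 := one_mul 1

lemma ss_meas : Measurable ss :=
  (measurable_const.indicator measurableSet_Icc).sub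
    (measurable_const.indicator measurableSet_Icc)

lemma ss_int : Integrable ss := (ind_int 0 1).sub (ind_int 2 3)

lemma ss_abs_le (t : ℝ) : |ss t| ≤ 1 := by
  unfold ss
  have h1 := ind_bounds 0 1 t
  have h2 := ind_bounds 2 3 t
  rw [abs_le]; constructor <;> linarith [h1.1, h1.2, h2.1, h2.2]

lemma cc_meas : Measurable cc := measurable_const.indicator measurableSet_Icc

lemma cc_int : Integrable cc := ind_int 0 3

lemma ind_one {a b t : ℝ} (h : a ≤ t ∧ t ≤ b) : (Set.Icc a b).indicator (1 : ℝ → ℝ) t = 1 := by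
  rw [Set.indicator_of_mem (Set.mem_Icc.2 h)]; rfl

lemma ind_zero {a b t : ℝ} (h : ¬ (a ≤ t ∧ t ≤ b)) : (Set.Icc a b).indicator (1 : ℝ → ℝ) t = 0 :=
  Set.indicator_of_notMem (by simpa [Set.mem_Icc] using h) _

lemma ss_mul_cc (t : ℝ) : ss t * cc t = ss t := by
  unfold ss cc
  by_cases h1 : (0:ℝ) ≤ t ∧ t ≤ 1 <;> by_cases h2 : (2:ℝ) ≤ t ∧ t ≤ 3
  · linarith [h1.2, h2.1]
  · rw [ind_one h1, ind_zero h2, ind_one ⟨h1.1, by linarith [h1.2]⟩]; norm_num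
  · rw [ind_zero h1, ind_one h2, ind_one ⟨by linarith [h2.1], h2.2⟩]; norm_num
  · rw [ind_zero h1, ind_zero h2]; norm_num

lemma ss_integral : ∫ t : ℝ, ss t = 0 := by
  unfold ss
  rw [integral_sub (ind_int 0 1) (ind_int 2 3),
      integral_indicator_one measurableSet_Icc, integral_indicator_one measurableSet_Icc,
      Real.volume_real_Icc]
  rw [Real.volume_real_Icc]
  norm_num

noncomputable def EE : (ℝ × ℝ) × ℝ → ℝ := fun q => ff q.1 * ss q.2
noncomputable def PP : (ℝ × ℝ) × ℝ → ℝ := fun q => ff q.1 * cc q.2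

lemma EE_int : Integrable EE := ff_int.mul_prod ss_int
lemma PP_int : Integrable PP := ff_int.mul_prod cc_int

lemma corr2_EE_zero (x : ℝ × ℝ) : corr2 EE PP x = 0 := by
  unfold corr2 EE PP
  have h1 : (fun q : (ℝ × ℝ) × ℝ => (ff q.1 * ss q.2) * (ff (q.1 - x) * cc q.2))
      = fun q : (ℝ × ℝ) × ℝ => (fun ξ => ff ξ * ff (ξ - x)) q.1 * (fun t => ss t * cc t) q.2 := by
    funext q; ring
  have key := MeasureTheory.integral_prod_mul (μ := (volume : Measure (ℝ × ℝ)))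
    (ν := (volume : Measure ℝ)) (fun ξ => ff ξ * ff (ξ - x)) (fun t => ss t * cc t)
  have h2 : (∫ t : ℝ, ss t * cc t) = 0 := by
    simp only [ss_mul_cc]; exact ss_integral
  calc (∫ q : (ℝ × ℝ) × ℝ, (ff q.1 * ss q.2) * (ff (q.1 - x) * cc q.2))
      = ∫ q : (ℝ × ℝ) × ℝ, (fun ξ => ff ξ * ff (ξ - x)) q.1 * (fun t => ss t * cc t) q.2 := by
        rw [h1]
    _ = (∫ ξ : ℝ × ℝ, ff ξ * ff (ξ - x)) * (∫ t : ℝ, ss t * cc t) := key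
    _ = 0 := by rw [h2, mul_zero]

noncomputable def vv : ℝ × ℝ := (10, 0)

noncomputable def HH : (ℝ × ℝ) × ℝ → ℝ :=
  fun q => shearAct vv EE q * PP (q.1 - 0, q.2)

noncomputable def BB : Set ((ℝ × ℝ) × ℝ) :=
  (Set.Icc (0:ℝ) (1/20) ×ˢ Set.Icc (0:ℝ) 1) ×ˢ Set.Icc (0:ℝ) (1/20)

lemma BB_meas : MeasurableSet BB :=
  ((measurableSet_Icc.prod measurableSet_Icc).prod measurableSet_Icc)

lemma HH_ge (q : (ℝ × ℝ) × ℝ) : BB.indicator 1 q ≤ HH q := by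
  unfold HH shearAct EE PP ff vv
  simp only [sub_zero, Prod.fst_add, Prod.snd_add, Prod.smul_mk, smul_eq_mul, mul_zero, add_zero]
  by_cases hq : q ∈ BB
  · obtain ⟨⟨⟨h1, h1'⟩, ⟨h2, h2'⟩⟩, ⟨h3, h3'⟩⟩ := hq
    rw [Set.indicator_of_mem (show q ∈ BB from ⟨⟨⟨h1, h1'⟩, ⟨h2, h2'⟩⟩, ⟨h3, h3'⟩⟩)]
    have e1 : uu (q.1.1 + q.2 * 10) = 1 := uu_of_mem (by linarith) (by linarith)
    have e2 : uu q.1.2 = 1 := uu_of_mem h2 h2'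
    have e3 : uu q.1.1 = 1 := uu_of_mem h1 (by linarith)
    have e4 : ss q.2 = 1 := by
      unfold ss
      rw [Set.indicator_of_mem (Set.mem_Icc.2 ⟨h3, by linarith⟩) (1 : ℝ → ℝ),
          Set.indicator_of_notMem (by simp only [Set.mem_Icc, not_and]; intro h; linarith)]
      norm_num
    have e5 : cc q.2 = 1 := by
      unfold cc
      rw [Set.indicator_of_mem (Set.mem_Icc.2 ⟨h3, by linarith⟩)]
      rfl
    rw [e1, e2, e3, e4, e5]; norm_num
  · rw [Set.indicator_of_notMem hq]
    by_cases hs : 0 ≤ ss q.2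
    · have hc : 0 ≤ cc q.2 := (ind_bounds 0 3 q.2).1
      have := uu_nonneg (q.1.1 + q.2 * 10)
      have := uu_nonneg q.1.1
      have := uu_nonneg q.1.2
      positivity
    · push_neg at hs
      have hq2 : 2 ≤ q.2 := by
        by_contra h
        push_neg at h
        have hz : (Set.Icc (2:ℝ) 3).indicator (1 : ℝ → ℝ) q.2 = 0 :=
          Set.indicator_of_notMem (by simp only [Set.mem_Icc, not_and]; intro hh; linarith) _
        have h0 := (ind_bounds 0 1 q.2).1
        unfold ss at hs; rw [hz] at hs; linarith
      by_cases h11 : 0 ≤ q.1.1 ∧ q.1.1 ≤ 1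
      · have hz : uu (q.1.1 + q.2 * 10) = 0 := uu_eq_zero (by push_neg; intro _; linarith [h11.1])
        rw [hz]; ring_nf; simp
      · have hz : uu q.1.1 = 0 := uu_eq_zero h11
        rw [hz]; ring_nf; simp

lemma HH_int : Integrable HH := by
  unfold HH
  apply Integrable.bdd_mul (c := 1)
  · have h : (fun q : (ℝ × ℝ) × ℝ => PP (q.1 - 0, q.2)) = PP := by
      funext q; simp
    rw [h]; exact PP_int
  · apply Measurable.aestronglyMeasurable
    have hE : Measurable EE := (ff_meas.comp measurable_fst).mul (ss_meas.comp measurable_snd)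
    have hmap : Measurable (fun p : (ℝ × ℝ) × ℝ => (p.1 + p.2 • vv, p.2)) :=
      (measurable_fst.add (measurable_snd.smul_const vv)).prodMk measurable_snd
    exact hE.comp hmap
  · refine Filter.Eventually.of_forall (fun q => ?_)
    show ‖EE (q.1 + q.2 • vv, q.2)‖ ≤ 1
    unfold EE
    rw [Real.norm_eq_abs, abs_mul]
    have h1 : |ff (q.1 + q.2 • vv)| ≤ 1 := by
      rw [abs_of_nonneg (ff_nonneg _)]; exact ff_le_one _
    calc |ff (q.1 + q.2 • vv)| * |ss q.2| ≤ 1 * 1 :=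
      mul_le_mul h1 (ss_abs_le _) (abs_nonneg _) zero_le_one
    _ = 1 := one_mul 1

lemma HH_pos : 0 < ∫ q, HH q := by
  have hind : Integrable (BB.indicator (1 : ((ℝ × ℝ) × ℝ) → ℝ)) := by
    rw [integrable_indicator_iff BB_meas]
    refine integrableOn_const (ne_of_lt ?_)
    rw [show (volume : Measure ((ℝ × ℝ) × ℝ))
        = ((volume : Measure ℝ).prod volume).prod volume from rfl]
    unfold BB
    simp only [Measure.prod_prod, Real.volume_Icc]
    exact ENNReal.mul_lt_top (ENNReal.mul_lt_top ENNReal.ofReal_lt_top ENNReal.ofReal_lt_top)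
      ENNReal.ofReal_lt_top
  have hmono := integral_mono hind HH_int HH_ge
  have hvol : (∫ q, BB.indicator (1 : ((ℝ × ℝ) × ℝ) → ℝ) q) = 1/400 := by
    rw [integral_indicator_one BB_meas]
    rw [show (volume : Measure ((ℝ × ℝ) × ℝ))
        = ((volume : Measure ℝ).prod volume).prod volume from rfl]
    unfold BB
    simp only [Measure.real, Measure.prod_prod, Real.volume_Icc]
    rw [← ENNReal.ofReal_mul (by norm_num), ← ENNReal.ofReal_mul (by norm_num)]
    rw [ENNReal.toReal_ofReal (by norm_num)]
    norm_num
  rw [hvol] at hmono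
  linarith

/-- the 2D projection correlation of a sheared signal need not be
a translate of the 2D projection correlation of the original signal. -/
theorem corr2_shear_not_translate :
    ∃ (E φ : (ℝ × ℝ) × ℝ → ℝ) (v : ℝ × ℝ),
      Integrable E ∧ Integrable φ ∧
      ¬ ∃ w : ℝ × ℝ, ∀ x : ℝ × ℝ, corr2 (shearAct v E) φ x = corr2 E φ (x + w) := by
  refine ⟨EE, PP, vv, EE_int, PP_int, ?_⟩
  rintro ⟨w, hw⟩
  have h0 := hw 0
  rw [corr2_EE_zero] at h0
  have hr : corr2 (shearAct vv EE) PP 0 = ∫ q, HH q := rfl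
  rw [hr] at h0
  exact absurd h0 (ne_of_gt HH_pos)
end
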